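/- A light condensed set X is discrete if and only if it lies in the essential image of the functor sending a set Y to the sheaf S ↦ LocConst(S, Y) of locally constant maps on light profinite sets; that is, X is discrete if and only if there exists a set Y and an isomorphism of light condensed sets X ≅ LocConst(−, Y). -/
import Mathlib

universe u

open CategoryTheory Limits

/-- A light condensed set `X` is discrete if and only if it lies in the essential image of the
functor sending a set `Y` to the sheaf `S ↦ LocConst(S, Y)` of locally constant maps on light
profinite sets; that is, `X` is discrete if and only if there exists a set `Y` and an isomorphism
of light condensed sets `X ≅ LightCondSet.LocallyConstant.functor.obj Y`. -/
theorem lightCondSet_isDiscrete_iff_locallyConstant (X : LightCondSet.{u}) :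
    X.IsDiscrete ↔ ∃ (Y : Type u),
      Nonempty (X ≅ LightCondSet.LocallyConstant.functor.obj Y) := by
  have h := (LightCondSet.isDiscrete_tfae X).out 0 3
  rw [h]
  constructor
  · rintro ⟨Y, ⟨i⟩⟩
    exact ⟨Y, ⟨i.symm⟩⟩
  · rintro ⟨Y, ⟨i⟩⟩
    exact ⟨Y, ⟨i.symm⟩⟩
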